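/- Let F be a semifield and let f : (ℤ/N) × ℤ → F satisfy f(s, t+1)·f(s, t−1) = f(s+1, t)·f(s−1, t), where N = 2m + 2n. Then for every (s, t), f(s, t) = c · f(s + m + n, t − m − n), where c is the path-invariant constant of the recurrence. -/

import Mathlib

/-- A semifield in the sense of the paper: a commutative group under
multiplication, together with a commutative associative addition over
which multiplication distributes (no zero element). -/
class OctSemifield (F : Type*) extends CommGroup F, Add F where
  add_comm : ∀ a b : F, a + b = b + a
  add_assoc : ∀ a b c : F, a + b + c = a + (b + c)
  mul_add : ∀ a b c : F, a * (b + c) = a * b + a * c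

/-- Periodicity of the boundary recurrence on the cylinder ℤ/(2m+2n) × ℤ. -/
theorem boundary_periodicity {F : Type*} [OctSemifield F]
    (m n : ℕ) (hm : 0 < m) (hn : 0 < n)
    (f : ZMod (2 * m + 2 * n) → ℤ → F)
    (hf : ∀ s t, f s (t + 1) * f s (t - 1) = f (s + 1) t * f (s - 1) t) :
    ∃ c : F, ∀ (s : ZMod (2 * m + 2 * n)) (t : ℤ), Even ((s.val : ℤ) + t) →
      f s t = c * f (s + (m : ZMod (2 * m + 2 * n)) + (n : ZMod (2 * m + 2 * n)))
        (t - (m : ℤ) - (n : ℤ)) := by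
  haveI : NeZero (2 * m + 2 * n) := ⟨by omega⟩
  set K := m + n with hK
  set R : ZMod (2 * m + 2 * n) → ℤ → F :=
    fun s t => f s (t + 1) * (f (s + 1) t)⁻¹ with hRdef
  -- diagonal invariance
  have hA : ∀ (s : ZMod (2 * m + 2 * n)) (t : ℤ), R s t = R (s + 1) (t + 1) := by
    intro s t
    have h1 : f (s + 1) (t + 2) * f (s + 1) t = f (s + 1 + 1) (t + 1) * f s (t + 1) := by
      have h := hf (s + 1) (t + 1)
      rw [show t + 1 + 1 = t + 2 from by ring, show t + 1 - 1 = t from by ring,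
        show s + 1 - 1 = s from by ring] at h
      exact h
    simp only [hRdef]
    rw [show t + 1 + 1 = t + 2 from by ring, ← div_eq_mul_inv, ← div_eq_mul_inv,
      div_eq_div_iff_mul_eq_mul, mul_comm]
    exact h1.symm
  -- R depends only on s - t
  have hShift : ∀ (t : ℤ) (a : ZMod (2 * m + 2 * n)), R a t = R (a - (t : ZMod (2 * m + 2 * n))) 0 := by
    intro t
    induction t using Int.induction_on with
    | zero => intro a; norm_num
    | succ i ih =>
      intro a
      have h := hA (a - 1) i
      rw [show a - 1 + 1 = a from by ring] at h
      rw [← h, ih (a - 1)]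
      congr 1
      push_cast
      ring
    | pred i ih =>
      intro a
      have h := hA a (-(i : ℤ) - 1)
      rw [show (-(i : ℤ) - 1) + 1 = -(i : ℤ) from by ring] at h
      rw [h, ih (a + 1)]
      congr 1
      push_cast
      ring
  set R0 : ZMod (2 * m + 2 * n) → F := fun a => R a 0 with hR0
  have hKN : (2 * (K : ZMod (2 * m + 2 * n))) = 0 := by
    have h2K : (2 * K : ℕ) = 2 * m + 2 * n := by omega
    calc (2 : ZMod (2 * m + 2 * n)) * (K : ZMod (2 * m + 2 * n))
        = ((2 * K : ℕ) : ZMod (2 * m + 2 * n)) := by push_cast; ring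
      _ = ((2 * m + 2 * n : ℕ) : ZMod (2 * m + 2 * n)) := by rw [h2K]
      _ = 0 := ZMod.natCast_self _
  have hTrans1 : ∀ a : ZMod (2 * m + 2 * n),
      (∏ j ∈ Finset.range K, R0 (2 * (a + 1 + (j : ZMod (2 * m + 2 * n))) + 1))
        = ∏ j ∈ Finset.range K, R0 (2 * (a + (j : ZMod (2 * m + 2 * n))) + 1) := by
    intro a
    have e1 := Finset.prod_range_succ (fun j => R0 (2 * (a + (j : ZMod (2 * m + 2 * n))) + 1)) K
    have e2 := Finset.prod_range_succ' (fun j => R0 (2 * (a + (j : ZMod (2 * m + 2 * n))) + 1)) K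
    have hgK : R0 (2 * (a + (K : ZMod (2 * m + 2 * n))) + 1)
        = R0 (2 * (a + ((0 : ℕ) : ZMod (2 * m + 2 * n))) + 1) := by
      congr 1
      rw [mul_add, hKN]
      push_cast
      ring
    rw [e1, hgK] at e2
    have e3 : (∏ j ∈ Finset.range K, R0 (2 * (a + ((j + 1 : ℕ) : ZMod (2 * m + 2 * n))) + 1))
        = ∏ j ∈ Finset.range K, R0 (2 * (a + 1 + (j : ZMod (2 * m + 2 * n))) + 1) := by
      apply Finset.prod_congr rfl
      intro j _
      congr 1
      push_cast
      ring
    rw [e3] at e2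
    exact (mul_right_cancel e2).symm
  have hTransZ : ∀ w : ℤ,
      (∏ j ∈ Finset.range K, R0 (2 * ((w : ZMod (2 * m + 2 * n)) + (j : ZMod (2 * m + 2 * n))) + 1))
        = ∏ j ∈ Finset.range K, R0 (2 * ((j : ZMod (2 * m + 2 * n))) + 1) := by
    intro w
    induction w using Int.induction_on with
    | zero => norm_num
    | succ i ih =>
      have h1 := hTrans1 (((i : ℤ) : ZMod (2 * m + 2 * n)))
      rw [show (((i : ℤ) + 1 : ℤ) : ZMod (2 * m + 2 * n)) = ((i : ℤ) : ZMod (2 * m + 2 * n)) + 1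
        from by push_cast; ring]
      rw [h1, ih]
    | pred i ih =>
      have h1 := hTrans1 (((-(i : ℤ) - 1 : ℤ)) : ZMod (2 * m + 2 * n))
      rw [show ((-(i : ℤ) - 1 : ℤ) : ZMod (2 * m + 2 * n)) + 1
          = ((-(i : ℤ) : ℤ) : ZMod (2 * m + 2 * n)) from by push_cast; ring] at h1
      rw [← h1]
      exact ih
  -- telescoping
  have hTel : ∀ (s : ZMod (2 * m + 2 * n)) (t : ℤ) (k : ℕ),
      f s t = (∏ j ∈ Finset.range k,
          R (s + (j : ZMod (2 * m + 2 * n))) (t - (j : ℤ) - 1))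
        * f (s + (k : ZMod (2 * m + 2 * n))) (t - (k : ℤ)) := by
    intro s t k
    induction k with
    | zero => simp
    | succ k ih =>
      have e1 : s + ((k + 1 : ℕ) : ZMod (2 * m + 2 * n))
          = s + (k : ZMod (2 * m + 2 * n)) + 1 := by push_cast; ring
      have e2 : t - ((k + 1 : ℕ) : ℤ) = t - (k : ℤ) - 1 := by push_cast; ring
      have key : R (s + (k : ZMod (2 * m + 2 * n))) (t - (k : ℤ) - 1)
            * f (s + (k : ZMod (2 * m + 2 * n)) + 1) (t - (k : ℤ) - 1)
          = f (s + (k : ZMod (2 * m + 2 * n))) (t - (k : ℤ)) := by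
        simp only [hRdef]
        rw [inv_mul_cancel_right, show t - (k : ℤ) - 1 + 1 = t - (k : ℤ) from by ring]
      rw [Finset.prod_range_succ, e1, e2, mul_assoc, key]
      exact ih
  refine ⟨∏ j ∈ Finset.range K, R0 (2 * ((j : ZMod (2 * m + 2 * n))) + 1), ?_⟩
  intro s t hev
  obtain ⟨e, he⟩ := hev
  have hmain := hTel s t K
  have hfac : ∀ j ∈ Finset.range K,
      R (s + (j : ZMod (2 * m + 2 * n))) (t - (j : ℤ) - 1)
        = R0 (2 * (((e - t : ℤ) : ZMod (2 * m + 2 * n)) + (j : ZMod (2 * m + 2 * n))) + 1) := by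
    intro j _
    rw [hShift (t - (j : ℤ) - 1) (s + (j : ZMod (2 * m + 2 * n)))]
    simp only [hR0]
    congr 1
    have hsv : s = (((s.val : ℤ)) : ZMod (2 * m + 2 * n)) := by
      rw [Int.cast_natCast, ZMod.natCast_val, ZMod.cast_id]
    have hst : (((s.val : ℤ)) : ZMod (2 * m + 2 * n))
        = ((2 * (e - t) + t : ℤ) : ZMod (2 * m + 2 * n)) := by
      congr 1
      omega
    rw [hsv, hst]
    push_cast
    ring
  rw [Finset.prod_congr rfl hfac, hTransZ (e - t)] at hmain
  rw [hmain]
  have ea : s + (K : ZMod (2 * m + 2 * n))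
      = s + (m : ZMod (2 * m + 2 * n)) + (n : ZMod (2 * m + 2 * n)) := by
    rw [hK]; push_cast; ring
  have eb : t - (K : ℤ) = t - (m : ℤ) - (n : ℤ) := by rw [hK]; push_cast; ring
  rw [ea, eb]
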